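/- Let f : [0,1] → ℝ be convex on the interval [0, 2/3] and satisfy f(2x) + 2·f(1−x) = 0 for all x ∈ [0, 1/3]. Then f(x) + f(y) + f(z) ≤ 0 for all x, y, z ∈ [0,1] with x + y + z = 2. -/
import Mathlib


open Set

/-- If `f : [0,1] → ℝ` is convex on `[0, 2/3]` and satisfies `f(2x) + 2f(1−x) = 0` for all
`x ∈ [0, 1/3]`, then `f(x) + f(y) + f(z) ≤ 0` whenever `x, y, z ∈ [0,1]` and `x + y + z = 2`. -/
theorem sum_nonpos_of_convex (f : ℝ → ℝ)
    (hconv : ConvexOn ℝ (Set.Icc (0 : ℝ) (2/3)) f)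
    (hsym : ∀ x ∈ Set.Icc (0 : ℝ) (1/3), f (2*x) + 2 * f (1 - x) = 0) :
    ∀ x ∈ Set.Icc (0 : ℝ) 1, ∀ y ∈ Set.Icc (0 : ℝ) 1, ∀ z ∈ Set.Icc (0 : ℝ) 1,
      x + y + z = 2 → f x + f y + f z ≤ 0 := by
  have conv2 : ∀ a b t : ℝ, 0 ≤ a → a ≤ 2/3 → 0 ≤ b → b ≤ 2/3 → 0 ≤ t → t ≤ 1 →
      f (t*a + (1-t)*b) ≤ t * f a + (1-t) * f b := by
    intro a b t ha0 ha1 hb0 hb1 ht0 ht1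
    have := hconv.2 (mem_Icc.mpr ⟨ha0, ha1⟩) (mem_Icc.mpr ⟨hb0, hb1⟩) ht0
      (by linarith : (0:ℝ) ≤ 1 - t) (by ring)
    simpa using this
  have hval : ∀ z : ℝ, 2/3 ≤ z → z ≤ 1 → f z = - f (2 - 2*z) / 2 := by
    intro z h1 h2
    have h := hsym (1 - z) (mem_Icc.mpr ⟨by linarith, by linarith⟩)
    have h2' : (2 : ℝ) * (1 - z) = 2 - 2*z := by ring
    have h3 : (1 : ℝ) - (1 - z) = z := by ring
    rw [h2', h3] at h
    linarith
  have hf23 : f (2/3) = 0 := by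
    have h := hval (2/3) le_rfl (by norm_num)
    have he : (2:ℝ) - 2*(2/3) = 2/3 := by norm_num
    rw [he] at h; linarith
  -- Case: x small, y and z big
  have lemA : ∀ x y z : ℝ, 0 ≤ x → x ≤ 2/3 → 2/3 ≤ y → y ≤ 1 → 2/3 ≤ z → z ≤ 1 →
      x + y + z = 2 → f x + f y + f z ≤ 0 := by
    intro x y z hx0 hx1 hy0 hy1 hz0 hz1 hsum
    have hy' := hval y hy0 hy1
    have hz' := hval z hz0 hz1
    have hc := conv2 (2-2*y) (2-2*z) (1/2) (by linarith) (by linarith) (by linarith)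
      (by linarith) (by norm_num) (by norm_num)
    have hx : (1/2:ℝ)*(2-2*y) + (1-1/2)*(2-2*z) = x := by linarith
    rw [hx] at hc
    linarith
  -- Case: x and y small, z big
  have lemB : ∀ x y z : ℝ, 0 ≤ x → x ≤ 2/3 → 0 ≤ y → y ≤ 2/3 → 2/3 ≤ z → z ≤ 1 →
      x + y + z = 2 → f x + f y + f z ≤ 0 := by
    intro x y z hx0 hx1 hy0 hy1 hz0 hz1 hsum
    have hz' := hval z hz0 hz1
    have hw0 : (0:ℝ) ≤ 2 - 2*z := by linarith
    have hw1 : (2:ℝ) - 2*z ≤ 2/3 := by linarith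
    obtain ⟨s, hs⟩ : ∃ s : ℝ, s = x + y - 2/3 := ⟨_, rfl⟩
    have hy' : y = s + 2/3 - x := by linarith
    subst hy'
    have hs0 : 0 ≤ s := by linarith
    have hs1 : s ≤ 2/3 := by linarith
    have step1 := conv2 (2-2*z) (2/3) (1/2) hw0 hw1 (by norm_num) le_rfl (by norm_num)
      (by norm_num)
    have hmid : (1/2:ℝ)*(2-2*z) + (1-1/2)*(2/3) = s := by linarith
    rw [hmid] at step1
    have step2 : f x + f (s + 2/3 - x) ≤ f s + f (2/3) := by
      rcases eq_or_lt_of_le hs1 with h | h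
      · have hx : x = 2/3 := by linarith
        rw [hx, ← h]
        norm_num
      · have hd : (0:ℝ) < 2/3 - s := by linarith
        set t := (2/3 - x) / (2/3 - s) with ht
        have hkey : t * (2/3 - s) = 2/3 - x := div_mul_cancel₀ _ hd.ne'
        have ht0 : 0 ≤ t := div_nonneg (by linarith) (by linarith)
        have ht1 : t ≤ 1 := by rw [ht, div_le_one hd]; linarith
        have hc1 := conv2 s (2/3) t hs0 hs1 (by norm_num) le_rfl ht0 ht1
        have hc2 := conv2 s (2/3) (1-t) hs0 hs1 (by norm_num) le_rfl (by linarith)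
          (by linarith)
        have he1 : t * s + (1-t) * (2/3) = x := by linear_combination -hkey
        have he2 : (1-t) * s + (1-(1-t)) * (2/3) = s + 2/3 - x := by
          linear_combination hkey
        rw [he1] at hc1
        rw [he2] at hc2
        linarith
    linarith
  -- z big, x y arbitrary
  have key : ∀ x y z : ℝ, 0 ≤ x → x ≤ 1 → 0 ≤ y → y ≤ 1 → 2/3 ≤ z → z ≤ 1 →
      x + y + z = 2 → f x + f y + f z ≤ 0 := by
    intro x y z hx0 hx1 hy0 hy1 hz0 hz1 hsum
    rcases le_or_gt x (2/3) with hx2 | hx2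
    · rcases le_or_gt y (2/3) with hy2 | hy2
      · exact lemB x y z hx0 hx2 hy0 hy2 hz0 hz1 hsum
      · have := lemA x y z hx0 hx2 (le_of_lt hy2) hy1 hz0 hz1 hsum
        linarith
    · have hy2 : y ≤ 2/3 := by linarith
      have := lemA y x z hy0 hy2 (le_of_lt hx2) hx1 hz0 hz1 (by linarith)
      linarith
  intro x hx y hy z hz hsum
  obtain ⟨hx0, hx1⟩ := mem_Icc.mp hx
  obtain ⟨hy0, hy1⟩ := mem_Icc.mp hy
  obtain ⟨hz0, hz1⟩ := mem_Icc.mp hz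
  rcases le_or_gt (2/3) z with h | h
  · exact key x y z hx0 hx1 hy0 hy1 h hz1 hsum
  · rcases le_or_gt (2/3) y with h' | h'
    · have := key x z y hx0 hx1 hz0 hz1 h' hy1 (by linarith)
      linarith
    · have hxb : 2/3 ≤ x := by linarith
      have := key y z x hy0 hy1 hz0 hz1 hxb hx1 (by linarith)
      linarith
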